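/- Let u be a polynomial of degree at most p on [-1,1], write u = Σ_{i=0}^{p} a_i L_i with Legendre polynomials L_i, and let π u = Σ_{i=0}^{p-1} a_i L_i be its L²-orthogonal projection onto polynomials of degree at most p−1. Then ∫_{-1}^{1} u'(ξ) · ξ · (u(ξ) − π u(ξ)) dξ = p · a_p² · ∫_{-1}^{1} L_p(ξ)² dξ ≥ 0. -/

import Mathlib

open Polynomial intervalIntegral

/-- The `i`-th Legendre polynomial on `[-1,1]`, via Rodrigues' formula. -/
noncomputable def legendre (i : ℕ) : Polynomial ℝ :=
  ((1 : ℝ) / (2 ^ i * i.factorial)) • (⇑(derivative (R := ℝ)))^[i] ((X ^ 2 - 1) ^ i)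

namespace ProjErrAux

noncomputable def f (n : ℕ) : Polynomial ℝ := ((X : Polynomial ℝ) ^ 2 - 1) ^ n

lemma dvd_iterate (n : ℕ) : ∀ j ≤ n,
    ((X : Polynomial ℝ) ^ 2 - 1) ^ (n - j) ∣ (⇑(derivative (R := ℝ)))^[j] (f n) := by
  intro j
  induction j with
  | zero => intro _; simp [f]
  | succ k ih =>
    intro h
    obtain ⟨g, hg⟩ := ih (Nat.le_of_succ_le h)
    rw [Function.iterate_succ_apply', hg, derivative_mul]
    have d1 : ((X : Polynomial ℝ) ^ 2 - 1) ^ (n - (k+1)) ∣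
        derivative (((X : Polynomial ℝ) ^ 2 - 1) ^ (n - k)) := by
      rw [derivative_pow]
      exact dvd_mul_of_dvd_left (dvd_mul_of_dvd_right (pow_dvd_pow _ (by omega)) _) _
    exact dvd_add (d1.mul_right g)
      (dvd_mul_of_dvd_left (pow_dvd_pow _ (by omega)) _)

lemma eval_iter_zero (n j : ℕ) (h : j < n) (x : ℝ) (hx : x = 1 ∨ x = -1) :
    ((⇑(derivative (R := ℝ)))^[j] (f n)).eval x = 0 := by
  obtain ⟨g, hg⟩ := dvd_iterate n j h.le
  have hx2 : x ^ 2 - 1 = 0 := by rcases hx with h | h <;> simp [h]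
  rw [hg, eval_mul, eval_pow, eval_sub, eval_pow, eval_one, eval_X, hx2,
    zero_pow (by omega), zero_mul]

lemma poly_intable (P : Polynomial ℝ) (a b : ℝ) :
    IntervalIntegrable (fun x => P.eval x) MeasureTheory.volume a b :=
  (P.continuous).intervalIntegrable a b

lemma ibp (P Q : Polynomial ℝ) :
    ∫ x in (-1:ℝ)..1, (derivative P).eval x * Q.eval x
      = P.eval 1 * Q.eval 1 - P.eval (-1) * Q.eval (-1)
        - ∫ x in (-1:ℝ)..1, P.eval x * (derivative Q).eval x := by
  have h := intervalIntegral.integral_mul_deriv_eq_deriv_mul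
    (u := fun x => P.eval x) (u' := fun x => (derivative P).eval x)
    (v := fun x => Q.eval x) (v' := fun x => (derivative Q).eval x)
    (a := (-1:ℝ)) (b := 1)
    (fun x _ => P.hasDerivAt x) (fun x _ => Q.hasDerivAt x)
    (poly_intable _ _ _) (poly_intable _ _ _)
  linarith [h]

lemma iter_ibp (n : ℕ) : ∀ m ≤ n, ∀ q : Polynomial ℝ,
    (∫ x in (-1:ℝ)..1, ((⇑(derivative (R := ℝ)))^[m] (f n)).eval x * q.eval x)
      = (-1:ℝ)^m * ∫ x in (-1:ℝ)..1, (f n).eval x * ((⇑(derivative (R := ℝ)))^[m] q).eval x := by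
  intro m
  induction m with
  | zero => intro _ q; simp
  | succ k ih =>
    intro h q
    rw [Function.iterate_succ_apply',
      ibp ((⇑(derivative (R := ℝ)))^[k] (f n)) q,
      eval_iter_zero n k (by omega) 1 (Or.inl rfl),
      eval_iter_zero n k (by omega) (-1) (Or.inr rfl),
      ih (Nat.le_of_succ_le h) (derivative q),
      Function.iterate_succ_apply]
    ring

lemma orth (n : ℕ) (q : Polynomial ℝ) (hq : q.natDegree < n) :
    ∫ x in (-1:ℝ)..1, (legendre n).eval x * q.eval x = 0 := by
  have h0 : (⇑(derivative (R := ℝ)))^[n] q = 0 :=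
    Polynomial.iterate_derivative_eq_zero hq
  have key := iter_ibp n n le_rfl q
  rw [h0] at key
  simp only [eval_zero, mul_zero, intervalIntegral.integral_zero] at key
  have hrw : ∀ x : ℝ, (legendre n).eval x * q.eval x
      = ((1 : ℝ) / (2 ^ n * n.factorial)) *
        (((⇑(derivative (R := ℝ)))^[n] (f n)).eval x * q.eval x) := by
    intro x
    simp only [legendre, f, eval_smul, smul_eq_mul]
    ring
  simp only [hrw]
  rw [intervalIntegral.integral_const_mul, key, mul_zero]

lemma natDegree_legendre_le (n : ℕ) : (legendre n).natDegree ≤ n := by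
  have h2 : ((X : Polynomial ℝ) ^ 2 - 1).natDegree = 2 := by
    compute_degree!
  refine le_trans (natDegree_smul_le _ _) ?_
  refine le_trans (Polynomial.natDegree_iterate_derivative _ _) ?_
  have : (((X : Polynomial ℝ) ^ 2 - 1) ^ n).natDegree ≤ 2 * n := by
    refine le_trans (natDegree_pow_le) ?_
    rw [h2]; omega
  omega

lemma natDegree_X_mul_derivative_le (q : Polynomial ℝ) :
    (X * derivative q).natDegree ≤ q.natDegree := by
  by_cases hd : derivative q = 0
  · simp [hd]
  · have h1 : 1 ≤ q.natDegree := by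
      by_contra hlt
      have : q.natDegree = 0 := by omega
      obtain ⟨c, hc⟩ := Polynomial.natDegree_eq_zero.mp this
      rw [← hc] at hd
      simp at hd
    have := Polynomial.natDegree_derivative_le q
    refine le_trans (natDegree_mul_le) ?_
    have hX : (X : Polynomial ℝ).natDegree = 1 := natDegree_X
    omega

lemma diff_natDegree_lt (p : ℕ) (hp : 1 ≤ p) :
    (X * derivative (legendre p) - C (p : ℝ) * legendre p).natDegree < p := by
  set d := X * derivative (legendre p) - C (p : ℝ) * legendre p with hd
  by_cases h0 : d = 0
  · rw [h0]; simp only [natDegree_zero]; omega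
  rw [Polynomial.natDegree_lt_iff_degree_lt h0]
  rw [Polynomial.degree_lt_iff_coeff_zero]
  intro m hm
  have hL : (legendre p).natDegree ≤ p := natDegree_legendre_le p
  have hcoeff1 : (X * derivative (legendre p)).coeff m
      = (legendre p).coeff m * m := by
    have hm1 : m = (m - 1) + 1 := by omega
    rw [hm1, Polynomial.coeff_X_mul, Polynomial.coeff_derivative]
    have : ((m - 1 : ℕ) : ℝ) + 1 = ((m - 1) + 1 : ℕ) := by push_cast; ring
    rw [this, ← hm1]
  rw [hd, Polynomial.coeff_sub, hcoeff1, Polynomial.coeff_C_mul]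
  rcases eq_or_lt_of_le hm with hpm | hpm
  · rw [← hpm]; ring
  · rw [Polynomial.coeff_eq_zero_of_natDegree_lt (lt_of_le_of_lt hL hpm)]
    ring

end ProjErrAux

theorem projection_error_sign (p : ℕ) (a : ℕ → ℝ)
    (u πu : Polynomial ℝ)
    (hu : u = ∑ i ∈ Finset.range (p + 1), Polynomial.C (a i) * legendre i)
    (hπu : πu = ∑ i ∈ Finset.range p, Polynomial.C (a i) * legendre i) :
    (∫ ξ in (-1 : ℝ)..1, (derivative u).eval ξ * ξ * (u.eval ξ - πu.eval ξ))
        = (p : ℝ) * a p ^ 2 * ∫ ξ in (-1 : ℝ)..1, (legendre p).eval ξ ^ 2 ∧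
      0 ≤ (p : ℝ) * a p ^ 2 * ∫ ξ in (-1 : ℝ)..1, (legendre p).eval ξ ^ 2 := by
  have hnonneg : 0 ≤ (p : ℝ) * a p ^ 2 * ∫ ξ in (-1 : ℝ)..1, (legendre p).eval ξ ^ 2 :=
    mul_nonneg (mul_nonneg (Nat.cast_nonneg p) (sq_nonneg _))
      (intervalIntegral.integral_nonneg (by norm_num) (fun x _ => sq_nonneg _))
  refine ⟨?_, hnonneg⟩
  rcases Nat.eq_zero_or_pos p with hp | hp
  · subst hp
    have hL0 : legendre 0 = 1 := by simp [legendre]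
    simp [hu, hπu, hL0]
  · -- p ≥ 1
    have hdiffeval : ∀ x : ℝ, u.eval x - πu.eval x = a p * (legendre p).eval x := by
      intro x
      rw [hu, hπu, Finset.sum_range_succ]
      simp
    have hderiv : derivative u
        = ∑ i ∈ Finset.range (p + 1), C (a i) * derivative (legendre i) := by
      rw [hu, map_sum]
      refine Finset.sum_congr rfl fun i _ => ?_
      rw [derivative_mul, derivative_C, zero_mul, zero_add]
    have hintegrand : ∀ x : ℝ,
        (derivative u).eval x * x * (u.eval x - πu.eval x)
          = ∑ i ∈ Finset.range (p + 1),
              (legendre p).eval x * (C (a p * a i) * (X * derivative (legendre i))).eval x := by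
      intro x
      rw [hdiffeval, hderiv, eval_finset_sum, Finset.sum_mul, Finset.sum_mul]
      refine Finset.sum_congr rfl fun i _ => ?_
      simp only [eval_mul, eval_C, eval_X]
      ring
    simp only [hintegrand]
    rw [intervalIntegral.integral_finset_sum (fun i _ =>
      (by exact (((legendre p).continuous).mul
        ((C (a p * a i) * (X * derivative (legendre i))).continuous)).intervalIntegrable _ _ :
        IntervalIntegrable (fun x => (legendre p).eval x *
          (C (a p * a i) * (X * derivative (legendre i))).eval x) MeasureTheory.volume (-1) 1))]
    rw [Finset.sum_range_succ]
    have hzero : ∀ i ∈ Finset.range p,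
        (∫ x in (-1:ℝ)..1,
          (legendre p).eval x * (C (a p * a i) * (X * derivative (legendre i))).eval x) = 0 := by
      intro i hi
      apply ProjErrAux.orth
      have h1 : (C (a p * a i) * (X * derivative (legendre i))).natDegree
          ≤ (C (a p * a i)).natDegree + (X * derivative (legendre i)).natDegree :=
        natDegree_mul_le
      have h2 := ProjErrAux.natDegree_X_mul_derivative_le (legendre i)
      have h3 := ProjErrAux.natDegree_legendre_le i
      have h4 := Finset.mem_range.mp hi
      simp only [natDegree_C] at h1
      omega
    rw [Finset.sum_eq_zero hzero, zero_add]
    have hterm : ∀ x : ℝ,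
        (legendre p).eval x * (C (a p * a p) * (X * derivative (legendre p))).eval x
          = (a p * a p) * ((legendre p).eval x
                * (X * derivative (legendre p) - C (p : ℝ) * legendre p).eval x)
            + ((p : ℝ) * a p ^ 2) * (legendre p).eval x ^ 2 := by
      intro x
      simp only [eval_mul, eval_sub, eval_C, eval_X]
      ring
    simp only [hterm]
    have hi1 : IntervalIntegrable (fun x : ℝ => (a p * a p) * ((legendre p).eval x
          * (X * derivative (legendre p) - C (p : ℝ) * legendre p).eval x)) MeasureTheory.volume (-1) 1 := by
      exact (continuous_const.mul (((legendre p).continuous).mul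
        ((X * derivative (legendre p) - C (p : ℝ) * legendre p).continuous))).intervalIntegrable _ _
    have hi2 : IntervalIntegrable (fun x : ℝ => ((p : ℝ) * a p ^ 2) * (legendre p).eval x ^ 2)
          MeasureTheory.volume (-1) 1 := by
      exact (continuous_const.mul (((legendre p).continuous).pow 2)).intervalIntegrable _ _
    rw [intervalIntegral.integral_add hi1 hi2,
      intervalIntegral.integral_const_mul, intervalIntegral.integral_const_mul,
      ProjErrAux.orth p _ (ProjErrAux.diff_natDegree_lt p hp), mul_zero, zero_add]
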